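/- Let f : ℝ^d → ℝ be continuous and bounded below with exp(-f/δ) ∈ L¹. Then the Hessian of the soft Moreau envelope satisfies ∇²f^{λ,δ}(x) = (1/λ)I - (1/(λ²δ))Σ(x), where Σ(x) is the covariance matrix of the probability measure μ_x with density proportional to exp(-(f(y) + ‖x-y‖²/(2λ))/δ). In particular, if Σ(x) ⪯ λδ·I then ∇²f^{λ,δ}(x) ⪰ 0. -/

import Mathlib

open MeasureTheory Real
open scoped RealInnerProductSpace
set_option maxHeartbeats 1000000
set_option synthInstance.maxHeartbeats 400000

noncomputable section SoftMoreauAux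

variable {d : ℕ}

/-- Gaussian tail bound: `t * exp(-t²/(2s)) ≤ 1 + 2s`. -/
lemma softMoreau_gauss_bound1 {s t : ℝ} (hs : 0 < s) (ht : 0 ≤ t) :
    t * rexp (-t ^ 2 / (2 * s)) ≤ 1 + 2 * s := by
  rcases le_or_gt t 1 with h | h
  · have h1 : rexp (-t ^ 2 / (2 * s)) ≤ 1 := by
      rw [neg_div, Real.exp_le_one_iff]
      have : 0 ≤ t ^ 2 / (2 * s) := by positivity
      linarith
    nlinarith [Real.exp_pos (-t ^ 2 / (2 * s))]
  · have ha : 0 < t ^ 2 / (2 * s) := by positivity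
    have h1 : t ^ 2 / (2 * s) ≤ rexp (t ^ 2 / (2 * s)) := by
      have := Real.add_one_le_exp (t ^ 2 / (2 * s)); linarith
    have h2 : rexp (-t ^ 2 / (2 * s)) ≤ (t ^ 2 / (2 * s))⁻¹ := by
      rw [neg_div, Real.exp_neg]
      exact inv_anti₀ ha h1
    have h3 : t * rexp (-t ^ 2 / (2 * s)) ≤ t * (2 * s / t ^ 2) := by
      have : (t ^ 2 / (2 * s))⁻¹ = 2 * s / t ^ 2 := by
        field_simp
      rw [← this]
      exact mul_le_mul_of_nonneg_left h2 ht
    have h4 : t * (2 * s / t ^ 2) = 2 * s / t := by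
      field_simp
    nlinarith [div_le_self (by positivity : (0:ℝ) ≤ 2 * s) h.le]

lemma softMoreau_gauss_bound2 {s t : ℝ} (hs : 0 < s) (ht : 0 ≤ t) :
    t ^ 2 * rexp (-t ^ 2 / (2 * s)) ≤ 1 + 2 * s := by
  rcases le_or_gt t 1 with h | h
  · have h1 : rexp (-t ^ 2 / (2 * s)) ≤ 1 := by
      rw [neg_div, Real.exp_le_one_iff]
      have : 0 ≤ t ^ 2 / (2 * s) := by positivity
      linarith
    nlinarith [Real.exp_pos (-t ^ 2 / (2 * s))]
  · have ha : 0 < t ^ 2 / (2 * s) := by positivity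
    have h1 : t ^ 2 / (2 * s) ≤ rexp (t ^ 2 / (2 * s)) := by
      have := Real.add_one_le_exp (t ^ 2 / (2 * s)); linarith
    have h2 : rexp (-t ^ 2 / (2 * s)) ≤ (t ^ 2 / (2 * s))⁻¹ := by
      rw [neg_div, Real.exp_neg]
      exact inv_anti₀ ha h1
    have h3 : t ^ 2 * rexp (-t ^ 2 / (2 * s)) ≤ t ^ 2 * (2 * s / t ^ 2) := by
      have : (t ^ 2 / (2 * s))⁻¹ = 2 * s / t ^ 2 := by field_simp
      rw [← this]
      exact mul_le_mul_of_nonneg_left h2 (by positivity)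
    have h4 : t ^ 2 * (2 * s / t ^ 2) = 2 * s := by
      field_simp
    linarith



abbrev Esp (d : ℕ) := EuclideanSpace ℝ (Fin d)

def kk (f : Esp d → ℝ) (δ lam : ℝ) (x y : Esp d) : ℝ :=
  Real.exp (-(f y + ‖x - y‖ ^ 2 / (2 * lam)) / δ)

variable {f : Esp d → ℝ} {δ lam : ℝ}

lemma kk_pos (x y : Esp d) : 0 < kk f δ lam x y := Real.exp_pos _

lemma kk_eq (hδ : 0 < δ) (hlam : 0 < lam) (x y : Esp d) :
    kk f δ lam x y = rexp (-f y / δ) * rexp (-‖y - x‖ ^ 2 / (2 * (lam * δ))) := by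
  rw [kk, ← Real.exp_add, norm_sub_rev]
  congr 1
  field_simp
  ring

lemma kk_le (hδ : 0 < δ) (hlam : 0 < lam) (x y : Esp d) :
    kk f δ lam x y ≤ rexp (-f y / δ) := by
  rw [kk_eq hδ hlam]
  nth_rewrite 2 [← mul_one (rexp (-f y / δ))]
  refine mul_le_mul_of_nonneg_left ?_ (Real.exp_pos _).le
  rw [neg_div, Real.exp_le_one_iff]
  have : 0 ≤ ‖y - x‖ ^ 2 / (2 * (lam * δ)) := by positivity
  linarith

lemma kk_mul_norm_le (hδ : 0 < δ) (hlam : 0 < lam) (x y : Esp d) :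
    kk f δ lam x y * ‖y - x‖ ≤ (1 + 2 * (lam * δ)) * rexp (-f y / δ) := by
  rw [kk_eq hδ hlam]
  have h := softMoreau_gauss_bound1 (show (0:ℝ) < lam * δ by positivity) (norm_nonneg (y - x))
  nlinarith [Real.exp_pos (-f y / δ), Real.exp_pos (-‖y - x‖ ^ 2 / (2 * (lam * δ)))]

lemma kk_mul_sq_le (hδ : 0 < δ) (hlam : 0 < lam) (x y : Esp d) :
    kk f δ lam x y * ‖y - x‖ ^ 2 ≤ (1 + 2 * (lam * δ)) * rexp (-f y / δ) := by
  rw [kk_eq hδ hlam]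
  have h := softMoreau_gauss_bound2 (show (0:ℝ) < lam * δ by positivity) (norm_nonneg (y - x))
  nlinarith [Real.exp_pos (-f y / δ), Real.exp_pos (-‖y - x‖ ^ 2 / (2 * (lam * δ)))]

lemma kk_cont (hf : Continuous f) (x : Esp d) : Continuous (kk f δ lam x) := by
  unfold kk
  fun_prop

/-- derivative of `kk` in `x`. -/
def DD (f : Esp d → ℝ) (δ lam : ℝ) (x y : Esp d) : Esp d →L[ℝ] ℝ :=
  (kk f δ lam x y / (lam * δ)) • innerSL ℝ (y - x)

lemma normDD_le (hδ : 0 < δ) (hlam : 0 < lam) (x y : Esp d) :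
    ‖DD f δ lam x y‖ ≤ kk f δ lam x y / (lam * δ) * ‖y - x‖ := by
  refine ContinuousLinearMap.opNorm_le_bound _
    (mul_nonneg (div_nonneg (kk_pos x y).le (by positivity)) (norm_nonneg _)) fun u => ?_
  simp only [DD, ContinuousLinearMap.smul_apply, innerSL_apply_apply, smul_eq_mul, Real.norm_eq_abs]
  rw [abs_mul, abs_of_pos (div_pos (kk_pos x y) (by positivity))]
  rw [mul_assoc]
  refine mul_le_mul_of_nonneg_left ?_ (div_nonneg (kk_pos x y).le (by positivity))
  exact abs_real_inner_le_norm _ _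

lemma hasFDerivAt_kk (hδ : 0 < δ) (hlam : 0 < lam) (x y : Esp d) :
    HasFDerivAt (fun x => kk f δ lam x y) (DD f δ lam x y) x := by
  have h1 : HasFDerivAt (fun x : Esp d => ‖x - y‖ ^ 2) (2 • (innerSL ℝ (x - y))) x := by
    simpa using ((hasFDerivAt_id x).sub_const y).norm_sq
  have h2 := ((h1.const_mul (-(1 / (2 * lam * δ)))).add_const (-f y / δ)).exp
  have hfun : (fun x : Esp d => kk f δ lam x y)
      = fun x => rexp (-(1 / (2 * lam * δ)) * ‖x - y‖ ^ 2 + -f y / δ) := by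
    funext x
    rw [kk]
    congr 1
    field_simp
    ring
  rw [hfun]
  refine h2.congr_fderiv ?_
  have harg : rexp (-(1 / (2 * lam * δ)) * ‖x - y‖ ^ 2 + -f y / δ) = kk f δ lam x y := by
    rw [kk]; congr 1; field_simp; ring
  ext u
  simp only [DD, harg, ContinuousLinearMap.smul_apply, innerSL_apply_apply, smul_eq_mul,
    two_smul, ContinuousLinearMap.add_apply, inner_sub_left]
  field_simp
  ring



def ZZ (f : Esp d → ℝ) (δ lam : ℝ) (x : Esp d) : ℝ := ∫ y, kk f δ lam x y

def VV (f : Esp d → ℝ) (δ lam : ℝ) (x : Esp d) : Esp d := ∫ y, kk f δ lam x y • (y - x)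

def AA (f : Esp d → ℝ) (δ lam : ℝ) (x y : Esp d) : Esp d →L[ℝ] Esp d :=
  (DD f δ lam x y).smulRight (y - x) - kk f δ lam x y • ContinuousLinearMap.id ℝ (Esp d)

def WW (f : Esp d → ℝ) (δ lam : ℝ) (x : Esp d) : Esp d →L[ℝ] Esp d := ∫ y, AA f δ lam x y

lemma integrable_dom {X : Type*} [NormedAddCommGroup X]
    (hint : Integrable (fun y : Esp d => rexp (-f y / δ)))
    {h : Esp d → X} (hm : AEStronglyMeasurable h (volume : Measure (Esp d))) {C : ℝ}
    (hb : ∀ y, ‖h y‖ ≤ C * rexp (-f y / δ)) : Integrable h :=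
  (hint.const_mul C).mono' hm (Filter.Eventually.of_forall hb)

lemma normDD_le' (hδ : 0 < δ) (hlam : 0 < lam) (x y : Esp d) :
    ‖DD f δ lam x y‖ ≤ (1 + 2 * (lam * δ)) / (lam * δ) * rexp (-f y / δ) := by
  refine (normDD_le hδ hlam x y).trans ?_
  rw [div_mul_eq_mul_div, div_mul_eq_mul_div]
  exact div_le_div_of_nonneg_right (kk_mul_norm_le hδ hlam x y) (by positivity)

lemma inner_integral (u : Esp d) {h : Esp d → Esp d} (hh : Integrable h) :
    ⟪u, ∫ y, h y⟫ = ∫ y, ⟪u, h y⟫ := by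
  simpa using (ContinuousLinearMap.integral_comp_comm (innerSL ℝ u) hh).symm

variable (hf : Continuous f) (hδ : 0 < δ) (hlam : 0 < lam)
    (hint : Integrable (fun y : Esp d => rexp (-f y / δ)))
include hf hδ hlam hint

lemma intk (x : Esp d) : Integrable (kk f δ lam x) := by
  refine integrable_dom hint (kk_cont hf x).aestronglyMeasurable (C := 1) fun y => ?_
  rw [Real.norm_eq_abs, abs_of_pos (kk_pos x y), one_mul]
  exact kk_le hδ hlam x y

lemma intk_smul (x : Esp d) : Integrable (fun y => kk f δ lam x y • (y - x)) := by
  refine integrable_dom hint ?_ (C := 1 + 2 * (lam * δ)) fun y => ?_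
  · exact ((kk_cont hf x).smul (continuous_id.sub continuous_const)).aestronglyMeasurable
  · rw [norm_smul, Real.norm_eq_abs, abs_of_pos (kk_pos x y)]
    exact kk_mul_norm_le hδ hlam x y

lemma intk_smul_self (x : Esp d) : Integrable (fun y => kk f δ lam x y • y) := by
  refine integrable_dom hint ?_ (C := 1 + 2 * (lam * δ) + ‖x‖) fun y => ?_
  · exact ((kk_cont hf x).smul continuous_id).aestronglyMeasurable
  · rw [norm_smul, Real.norm_eq_abs, abs_of_pos (kk_pos x y)]
    have h1 : ‖y‖ ≤ ‖y - x‖ + ‖x‖ := by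
      simpa using norm_add_le (y - x) x
    have h2 := kk_mul_norm_le (f := f) hδ hlam x y
    have h3 := kk_le (f := f) hδ hlam x y
    have h4 := (kk_pos (f := f) (δ := δ) (lam := lam) x y).le
    nlinarith [norm_nonneg x, Real.exp_pos (-f y / δ)]

lemma intD (x : Esp d) : Integrable (DD f δ lam x) := by
  refine integrable_dom hint ?_ (C := (1 + 2 * (lam * δ)) / (lam * δ)) fun y => ?_
  · exact (((kk_cont hf x).div_const _).smul
      ((innerSL ℝ).continuous.comp (continuous_id.sub continuous_const))).aestronglyMeasurable
  · refine (normDD_le hδ hlam x y).trans ?_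
    rw [div_mul_eq_mul_div, div_mul_eq_mul_div]
    exact div_le_div_of_nonneg_right (kk_mul_norm_le hδ hlam x y) (by positivity)

lemma normAA_le (x y : Esp d) :
    ‖AA f δ lam x y‖ ≤ ((1 + 2 * (lam * δ)) / (lam * δ) + 1) * rexp (-f y / δ) := by
  have h1 : ‖AA f δ lam x y‖ ≤ ‖(DD f δ lam x y).smulRight (y - x)‖ +
      ‖kk f δ lam x y • ContinuousLinearMap.id ℝ (Esp d)‖ := norm_sub_le _ _
  rw [ContinuousLinearMap.norm_smulRight_apply] at h1
  have hD : ‖DD f δ lam x y‖ ≤ kk f δ lam x y / (lam * δ) * ‖y - x‖ := normDD_le hδ hlam x y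
  have hid : ‖kk f δ lam x y • ContinuousLinearMap.id ℝ (Esp d)‖ ≤ kk f δ lam x y := by
    refine ContinuousLinearMap.opNorm_le_bound _ (kk_pos x y).le fun u => ?_
    simp only [ContinuousLinearMap.smul_apply, ContinuousLinearMap.coe_id', id_eq]
    rw [norm_smul, Real.norm_eq_abs, abs_of_pos (kk_pos x y)]
  have h2 : kk f δ lam x y / (lam * δ) * ‖y - x‖ * ‖y - x‖ ≤
      (1 + 2 * (lam * δ)) / (lam * δ) * rexp (-f y / δ) := by
    have := kk_mul_sq_le (f := f) hδ hlam x y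
    rw [div_mul_eq_mul_div, div_mul_eq_mul_div, mul_assoc, ← sq, div_mul_eq_mul_div]
    exact div_le_div_of_nonneg_right this (by positivity)
  have h3 := kk_le (f := f) hδ hlam x y
  have h1' : ‖AA f δ lam x y‖ ≤ kk f δ lam x y / (lam * δ) * ‖y - x‖ * ‖y - x‖
      + kk f δ lam x y := by
    nlinarith [norm_nonneg (y - x)]
  have hfin : ((1 + 2 * (lam * δ)) / (lam * δ) + 1) * rexp (-f y / δ)
      = (1 + 2 * (lam * δ)) / (lam * δ) * rexp (-f y / δ) + rexp (-f y / δ) := by ring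
  linarith

lemma contAA (x : Esp d) : Continuous (AA f δ lam x) := by
  unfold AA
  refine Continuous.sub ?_ ((kk_cont hf x).smul continuous_const)
  exact (isBoundedBilinearMap_smulRight (𝕜 := ℝ)).continuous.comp
    ((((kk_cont hf x).div_const _).smul
      ((innerSL ℝ).continuous.comp (continuous_id.sub continuous_const))).prodMk
      (continuous_id.sub continuous_const))

lemma intA (x : Esp d) : Integrable (AA f δ lam x) :=
  integrable_dom hint (contAA hf hδ hlam hint x).aestronglyMeasurable
    (fun y => normAA_le hf hδ hlam hint x y)

lemma ZZ_pos (x : Esp d) : 0 < ZZ f δ lam x := by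
  rw [ZZ, integral_pos_iff_support_of_nonneg_ae
    (Filter.Eventually.of_forall fun y => (kk_pos x y).le) (intk hf hδ hlam hint x)]
  have hsupp : Function.support (kk f δ lam x) = Set.univ :=
    Set.eq_univ_of_forall fun y => (kk_pos x y).ne'
  rw [hsupp]
  exact isOpen_univ.measure_pos volume Set.univ_nonempty

lemma hasFDerivAt_ZZ (x₀ : Esp d) :
    HasFDerivAt (ZZ f δ lam) ((1 / (lam * δ)) • innerSL ℝ (VV f δ lam x₀)) x₀ := by
  have key := hasFDerivAt_integral_of_dominated_of_fderiv_le
    (𝕜 := ℝ) (μ := (volume : Measure (Esp d)))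
    (F := fun x y => kk f δ lam x y) (F' := fun x y => DD f δ lam x y) (x₀ := x₀)
    (bound := fun y => (1 + 2 * (lam * δ)) / (lam * δ) * rexp (-f y / δ))
    Filter.univ_mem
    (Filter.Eventually.of_forall fun x => (kk_cont hf x).aestronglyMeasurable)
    (intk hf hδ hlam hint x₀)
    (intD hf hδ hlam hint x₀).aestronglyMeasurable
    (Filter.Eventually.of_forall fun y x _ => normDD_le' hδ hlam x y)
    (hint.const_mul _)
    (Filter.Eventually.of_forall fun y x _ => hasFDerivAt_kk hδ hlam x y)
  have hId : (∫ y, DD f δ lam x₀ y) = (1 / (lam * δ)) • innerSL ℝ (VV f δ lam x₀) := by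
    ext u
    rw [ContinuousLinearMap.integral_apply (intD hf hδ hlam hint x₀)]
    have h2 : ⟪u, VV f δ lam x₀⟫ = ∫ y, kk f δ lam x₀ y * ⟪u, y - x₀⟫ := by
      rw [VV, inner_integral u (intk_smul hf hδ hlam hint x₀)]
      congr 1
      funext y
      rw [real_inner_smul_right]
    simp only [ContinuousLinearMap.smul_apply, innerSL_apply_apply, smul_eq_mul]
    rw [real_inner_comm, h2, ← integral_const_mul]
    congr 1
    funext y
    simp only [DD, ContinuousLinearMap.smul_apply, innerSL_apply_apply, smul_eq_mul]
    rw [real_inner_comm]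
    ring
  rwa [hId] at key

lemma hasFDerivAt_kk_smul (x y : Esp d) :
    HasFDerivAt (fun x : Esp d => kk f δ lam x y • (y - x)) (AA f δ lam x y) x := by
  have h1 : HasFDerivAt (fun x : Esp d => y - x) (-(ContinuousLinearMap.id ℝ (Esp d))) x := by
    exact (hasFDerivAt_id (𝕜 := ℝ) x).const_sub y
  have h2 := (hasFDerivAt_kk (f := f) hδ hlam x y).smul h1
  refine h2.congr_fderiv ?_
  refine ContinuousLinearMap.ext fun u => ?_
  simp only [AA, ContinuousLinearMap.sub_apply, ContinuousLinearMap.smulRight_apply,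
    ContinuousLinearMap.smul_apply, ContinuousLinearMap.neg_apply,
    ContinuousLinearMap.add_apply, ContinuousLinearMap.coe_id', id_eq, smul_neg]
  abel

lemma hasFDerivAt_VV (x₀ : Esp d) :
    HasFDerivAt (VV f δ lam) (WW f δ lam x₀) x₀ := by
  have key := hasFDerivAt_integral_of_dominated_of_fderiv_le
    (𝕜 := ℝ) (μ := (volume : Measure (Esp d)))
    (F := fun x y => kk f δ lam x y • (y - x)) (F' := fun x y => AA f δ lam x y) (x₀ := x₀)
    (bound := fun y => ((1 + 2 * (lam * δ)) / (lam * δ) + 1) * rexp (-f y / δ))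
    Filter.univ_mem
    (Filter.Eventually.of_forall fun x =>
      ((kk_cont hf x).smul (continuous_id.sub continuous_const)).aestronglyMeasurable)
    (intk_smul hf hδ hlam hint x₀)
    (intA hf hδ hlam hint x₀).aestronglyMeasurable
    (Filter.Eventually.of_forall fun y x _ => normAA_le hf hδ hlam hint x y)
    (hint.const_mul _)
    (Filter.Eventually.of_forall fun y x _ => hasFDerivAt_kk_smul hf hδ hlam hint x y)
  exact key

def FF (f : Esp d → ℝ) (δ lam : ℝ) (x : Esp d) : ℝ :=
  -δ * Real.log ((2 * Real.pi * lam * δ) ^ (-(d : ℝ) / 2) * ZZ f δ lam x)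

def GG (f : Esp d → ℝ) (δ lam : ℝ) (x : Esp d) : Esp d :=
  (-(lam * ZZ f δ lam x)⁻¹) • VV f δ lam x

def HH (f : Esp d → ℝ) (δ lam : ℝ) (x : Esp d) : Esp d →L[ℝ] Esp d :=
  (-(lam * ZZ f δ lam x)⁻¹) • WW f δ lam x +
  (((lam * ZZ f δ lam x) ^ 2)⁻¹ •
    (lam • ((1 / (lam * δ)) • innerSL ℝ (VV f δ lam x)))).smulRight (VV f δ lam x)

lemma intk1 (x u : Esp d) :
    Integrable (fun y => kk f δ lam x y * ⟪u, y - x⟫) := by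
  refine integrable_dom hint ?_ (C := ‖u‖ * (1 + 2 * (lam * δ))) fun y => ?_
  · exact ((kk_cont hf x).mul
      (Continuous.inner continuous_const (continuous_id.sub continuous_const))).aestronglyMeasurable
  · rw [Real.norm_eq_abs, abs_mul, abs_of_pos (kk_pos x y)]
    have h1 := abs_real_inner_le_norm u (y - x)
    have h2 := kk_mul_norm_le (f := f) hδ hlam x y
    have h3 := (kk_pos (f := f) (δ := δ) (lam := lam) x y).le
    nlinarith [abs_nonneg (⟪u, y - x⟫ : ℝ), norm_nonneg u, Real.exp_pos (-f y / δ),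
      norm_nonneg (y - x)]

lemma intk2 (x u : Esp d) :
    Integrable (fun y => kk f δ lam x y * ⟪u, y - x⟫ ^ 2) := by
  refine integrable_dom hint ?_ (C := ‖u‖ ^ 2 * (1 + 2 * (lam * δ))) fun y => ?_
  · exact ((kk_cont hf x).mul
      ((Continuous.inner continuous_const (continuous_id.sub continuous_const)).pow 2)).aestronglyMeasurable
  · rw [Real.norm_eq_abs, abs_mul, abs_of_pos (kk_pos x y), abs_of_nonneg (sq_nonneg _)]
    have h1 := abs_real_inner_le_norm u (y - x)
    have h2 := kk_mul_sq_le (f := f) hδ hlam x y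
    have h3 := (kk_pos (f := f) (δ := δ) (lam := lam) x y).le
    have h4 : (⟪u, y - x⟫ : ℝ) ^ 2 ≤ ‖u‖ ^ 2 * ‖y - x‖ ^ 2 := by
      nlinarith [abs_nonneg (⟪u, y - x⟫ : ℝ), sq_abs (⟪u, y - x⟫ : ℝ), norm_nonneg u,
        norm_nonneg (y - x)]
    nlinarith [Real.exp_pos (-f y / δ), norm_nonneg u, sq_nonneg (⟪u, y - x⟫ : ℝ)]

lemma inner_VV (x u : Esp d) :
    ⟪u, VV f δ lam x⟫ = ∫ y, kk f δ lam x y * ⟪u, y - x⟫ := by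
  rw [VV, inner_integral u (intk_smul hf hδ hlam hint x)]
  congr 1
  funext y
  rw [real_inner_smul_right]

lemma hasGradientAt_FF (x : Esp d) :
    HasGradientAt (FF f δ lam) (GG f δ lam x) x := by
  have hc₀ : (0:ℝ) < (2 * Real.pi * lam * δ) ^ (-(d : ℝ) / 2) :=
    Real.rpow_pos_of_pos (by positivity) _
  have hZ := ZZ_pos hf hδ hlam hint x
  set c₀ := (2 * Real.pi * lam * δ) ^ (-(d : ℝ) / 2) with hc₀def
  have houter : HasDerivAt (fun t : ℝ => -δ * Real.log (c₀ * t))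
      (-δ / ZZ f δ lam x) (ZZ f δ lam x) := by
    have h1 : HasDerivAt (fun t : ℝ => c₀ * t) c₀ (ZZ f δ lam x) := by
      simpa using (hasDerivAt_id (ZZ f δ lam x)).const_mul c₀
    have h2 := (Real.hasDerivAt_log (by positivity : c₀ * ZZ f δ lam x ≠ 0)).comp _ h1
    have h3 := h2.const_mul (-δ)
    refine h3.congr_deriv ?_
    field_simp
  have hcomp := houter.comp_hasFDerivAt x (hasFDerivAt_ZZ hf hδ hlam hint x)
  rw [hasGradientAt_iff_hasFDerivAt]
  refine hcomp.congr_fderiv ?_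
  refine ContinuousLinearMap.ext fun u => ?_
  simp only [InnerProductSpace.toDual_apply_apply, GG, ContinuousLinearMap.smul_apply,
    innerSL_apply_apply, smul_eq_mul, real_inner_smul_left]
  field_simp

lemma hasFDerivAt_GG (x : Esp d) :
    HasFDerivAt (GG f δ lam) (HH f δ lam x) x := by
  have hZ := ZZ_pos hf hδ hlam hint x
  have hZd := hasFDerivAt_ZZ hf hδ hlam hint x
  have hVd := hasFDerivAt_VV hf hδ hlam hint x
  have hc : HasFDerivAt (fun x => -(lam * ZZ f δ lam x)⁻¹)
      (((lam * ZZ f δ lam x) ^ 2)⁻¹ •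
        (lam • ((1 / (lam * δ)) • innerSL ℝ (VV f δ lam x)))) x := by
    have h1 : HasFDerivAt (fun x => lam * ZZ f δ lam x)
        (lam • ((1 / (lam * δ)) • innerSL ℝ (VV f δ lam x))) x := hZd.const_mul lam
    have h2 := ((hasDerivAt_inv (show lam * ZZ f δ lam x ≠ 0 by positivity)).comp_hasFDerivAt
      x h1).neg
    refine h2.congr_fderiv ?_
    refine ContinuousLinearMap.ext fun u => ?_
    simp only [ContinuousLinearMap.smul_apply, ContinuousLinearMap.neg_apply,
      innerSL_apply_apply, smul_eq_mul]
    ring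
  have h3 := hc.smul hVd
  exact h3

lemma inner_WW (x u : Esp d) :
    ⟪u, WW f δ lam x u⟫ = (1 / (lam * δ)) * (∫ y, kk f δ lam x y * ⟪u, y - x⟫ ^ 2)
      - ZZ f δ lam x * ‖u‖ ^ 2 := by
  have hWu : WW f δ lam x u = ∫ y, (AA f δ lam x y) u := by
    rw [WW]
    exact ContinuousLinearMap.integral_apply (intA hf hδ hlam hint x) u
  have hIu : Integrable (fun y => (AA f δ lam x y) u) :=
    (intA hf hδ hlam hint x).apply_continuousLinearMap u
  rw [hWu, inner_integral u hIu]
  have hpt : ∀ y, (⟪u, (AA f δ lam x y) u⟫ : ℝ)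
      = (1 / (lam * δ)) * (kk f δ lam x y * ⟪u, y - x⟫ ^ 2) - kk f δ lam x y * ‖u‖ ^ 2 := by
    intro y
    simp only [AA, DD, ContinuousLinearMap.sub_apply, ContinuousLinearMap.smulRight_apply,
      ContinuousLinearMap.smul_apply, innerSL_apply_apply, smul_eq_mul,
      ContinuousLinearMap.coe_id', id_eq, inner_sub_right, real_inner_smul_right]
    rw [real_inner_comm u (y - x), inner_sub_right, real_inner_self_eq_norm_sq]
    field_simp
  rw [show (fun y => (⟪u, (AA f δ lam x y) u⟫ : ℝ))
      = fun y => (1 / (lam * δ)) * (kk f δ lam x y * ⟪u, y - x⟫ ^ 2)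
        - kk f δ lam x y * ‖u‖ ^ 2 from funext hpt]
  rw [integral_sub (((intk2 hf hδ hlam hint x u).const_mul _))
    ((intk hf hδ hlam hint x).mul_const _)]
  rw [integral_const_mul, integral_mul_const]
  rfl

lemma inner_HH_eq (x u : Esp d) :
    ⟪u, HH f δ lam x u⟫ = (1 / lam) * ‖u‖ ^ 2 - (1 / (lam ^ 2 * δ)) *
      ((∫ y, kk f δ lam x y * ⟪u, y - x⟫ ^ 2) / ZZ f δ lam x
        - ((∫ y, kk f δ lam x y * ⟪u, y - x⟫) / ZZ f δ lam x) ^ 2) := by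
  have hZ := ZZ_pos hf hδ hlam hint x
  have h1 := inner_WW hf hδ hlam hint x u
  have h2 := inner_VV hf hδ hlam hint x u
  simp only [HH, ContinuousLinearMap.add_apply, ContinuousLinearMap.smul_apply,
    ContinuousLinearMap.smulRight_apply, innerSL_apply_apply, smul_eq_mul,
    inner_add_right, real_inner_smul_right]
  rw [h1, real_inner_comm u (VV f δ lam x), h2]
  field_simp
  ring

lemma integral_mu_eq {X : Type*} [NormedAddCommGroup X] [NormedSpace ℝ X] (x : Esp d)
    (h : Esp d → X) :
    ∫ y, h y ∂(volume.withDensity fun y => ENNReal.ofReal (kk f δ lam x y / ZZ f δ lam x))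
      = ∫ y, (kk f δ lam x y / ZZ f δ lam x) • h y := by
  have hmeas : Measurable fun y => Real.toNNReal (kk f δ lam x y / ZZ f δ lam x) :=
    (((kk_cont hf x).div_const _).measurable).real_toNNReal
  rw [show (fun y => ENNReal.ofReal (kk f δ lam x y / ZZ f δ lam x))
      = fun y => ((Real.toNNReal (kk f δ lam x y / ZZ f δ lam x) : NNReal) : ENNReal) from rfl]
  rw [integral_withDensity_eq_integral_smul hmeas]
  congr 1
  funext y
  rw [NNReal.smul_def, Real.coe_toNNReal _
    (div_nonneg (kk_pos x y).le (ZZ_pos hf hδ hlam hint x).le)]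

lemma mean_eq (x : Esp d) :
    (∫ y, y ∂(volume.withDensity fun y => ENNReal.ofReal (kk f δ lam x y / ZZ f δ lam x)))
      = x + (ZZ f δ lam x)⁻¹ • VV f δ lam x := by
  have hZ := ZZ_pos hf hδ hlam hint x
  rw [integral_mu_eq hf hδ hlam hint x (fun y => y)]
  have hsp : (fun y => (kk f δ lam x y / ZZ f δ lam x) • y)
      = fun y => (ZZ f δ lam x)⁻¹ • (kk f δ lam x y • (y - x))
        + (ZZ f δ lam x)⁻¹ • (kk f δ lam x y • x) := by
    funext y
    rw [← smul_add, ← smul_add, sub_add_cancel, smul_smul, div_eq_inv_mul]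
  have hA : Integrable (fun y : Esp d => (ZZ f δ lam x)⁻¹ • (kk f δ lam x y • (y - x))) :=
    (intk_smul hf hδ hlam hint x).smul (ZZ f δ lam x)⁻¹
  have hB : Integrable (fun y : Esp d => (ZZ f δ lam x)⁻¹ • (kk f δ lam x y • x)) :=
    ((intk hf hδ hlam hint x).smul_const x).smul (ZZ f δ lam x)⁻¹
  rw [hsp, integral_add hA hB, integral_smul, integral_smul, integral_smul_const]
  rw [show (∫ y, kk f δ lam x y • (y - x)) = VV f δ lam x from rfl,
    show (∫ y, kk f δ lam x y) = ZZ f δ lam x from rfl,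
    smul_smul, inv_mul_cancel₀ (ne_of_gt hZ), one_smul]
  abel

lemma cov_eq (x u : Esp d) :
    (∫ y, (⟪u, y - (x + (ZZ f δ lam x)⁻¹ • VV f δ lam x)⟫ : ℝ) ^ 2
        ∂(volume.withDensity fun y => ENNReal.ofReal (kk f δ lam x y / ZZ f δ lam x)))
      = (∫ y, kk f δ lam x y * ⟪u, y - x⟫ ^ 2) / ZZ f δ lam x
        - ((∫ y, kk f δ lam x y * ⟪u, y - x⟫) / ZZ f δ lam x) ^ 2 := by
  have hZ := ZZ_pos hf hδ hlam hint x
  set a : ℝ := (∫ y, kk f δ lam x y * ⟪u, y - x⟫) / ZZ f δ lam x with ha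
  rw [integral_mu_eq hf hδ hlam hint x _]
  have hpt : ∀ y : Esp d, (kk f δ lam x y / ZZ f δ lam x)
        • ((⟪u, y - (x + (ZZ f δ lam x)⁻¹ • VV f δ lam x)⟫ : ℝ) ^ 2)
      = (ZZ f δ lam x)⁻¹ * (kk f δ lam x y * ⟪u, y - x⟫ ^ 2)
        - (2 * a * (ZZ f δ lam x)⁻¹) * (kk f δ lam x y * ⟪u, y - x⟫)
        + (a ^ 2 * (ZZ f δ lam x)⁻¹) * kk f δ lam x y := by
    intro y
    have hyd : y - (x + (ZZ f δ lam x)⁻¹ • VV f δ lam x)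
        = (y - x) - (ZZ f δ lam x)⁻¹ • VV f δ lam x := by abel
    rw [hyd, inner_sub_right, real_inner_smul_right, inner_VV hf hδ hlam hint x u]
    have hb : (ZZ f δ lam x)⁻¹ * (∫ y, kk f δ lam x y * ⟪u, y - x⟫) = a := by
      rw [ha]; ring
    rw [hb, smul_eq_mul]
    field_simp
    ring
  rw [show (fun y => (kk f δ lam x y / ZZ f δ lam x)
      • ((⟪u, y - (x + (ZZ f δ lam x)⁻¹ • VV f δ lam x)⟫ : ℝ) ^ 2))
      = fun y => (ZZ f δ lam x)⁻¹ * (kk f δ lam x y * ⟪u, y - x⟫ ^ 2)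
        - (2 * a * (ZZ f δ lam x)⁻¹) * (kk f δ lam x y * ⟪u, y - x⟫)
        + (a ^ 2 * (ZZ f δ lam x)⁻¹) * kk f δ lam x y from funext hpt]
  have hA : Integrable (fun y : Esp d => (ZZ f δ lam x)⁻¹ * (kk f δ lam x y * ⟪u, y - x⟫ ^ 2)) :=
    (intk2 hf hδ hlam hint x u).const_mul _
  have hB : Integrable (fun y : Esp d =>
      (2 * a * (ZZ f δ lam x)⁻¹) * (kk f δ lam x y * ⟪u, y - x⟫)) :=
    (intk1 hf hδ hlam hint x u).const_mul _
  have hC : Integrable (fun y : Esp d => (a ^ 2 * (ZZ f δ lam x)⁻¹) * kk f δ lam x y) :=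
    (intk hf hδ hlam hint x).const_mul _
  have hAB : Integrable (fun y : Esp d =>
      (ZZ f δ lam x)⁻¹ * (kk f δ lam x y * ⟪u, y - x⟫ ^ 2)
        - (2 * a * (ZZ f δ lam x)⁻¹) * (kk f δ lam x y * ⟪u, y - x⟫)) := hA.sub hB
  rw [integral_add hAB hC, integral_sub hA hB,
    integral_const_mul, integral_const_mul, integral_const_mul]
  rw [show (∫ y, kk f δ lam x y * ⟪u, y - x⟫) = a * ZZ f δ lam x from by
    rw [ha]; field_simp]
  rw [show (∫ y, kk f δ lam x y) = ZZ f δ lam x from rfl]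
  have hZne : ZZ f δ lam x ≠ 0 := ne_of_gt hZ
  field_simp
  ring

end SoftMoreauAux

/-- Hessian identity for the soft Moreau envelope:
`∇²f^{λ,δ}(x) = (1/λ)I - (1/(λ²δ))Σ(x)` (as quadratic forms), where `Σ(x)` is the
covariance of the localized Gibbs measure `μ_x`; in particular `Σ(x) ⪯ λδ·I` implies
`∇²f^{λ,δ}(x) ⪰ 0`. -/
theorem hessian_softMoreau_identity {d : ℕ}
    (f : EuclideanSpace ℝ (Fin d) → ℝ) (hf : Continuous f)
    (hbdd : ∃ c : ℝ, ∀ x, c ≤ f x)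
    (δ lam : ℝ) (hδ : 0 < δ) (hlam : 0 < lam)
    (hint : Integrable (fun y : EuclideanSpace ℝ (Fin d) => Real.exp (-f y / δ)))
    (F : EuclideanSpace ℝ (Fin d) → ℝ)
    (hF : ∀ x, F x = -δ * Real.log ((2 * Real.pi * lam * δ) ^ (-(d : ℝ) / 2) *
          ∫ y : EuclideanSpace ℝ (Fin d),
            Real.exp (-(f y + ‖x - y‖ ^ 2 / (2 * lam)) / δ)))
    (Z : EuclideanSpace ℝ (Fin d) → ℝ)
    (hZ : ∀ x, Z x = ∫ y : EuclideanSpace ℝ (Fin d),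
        Real.exp (-(f y + ‖x - y‖ ^ 2 / (2 * lam)) / δ))
    (μ : EuclideanSpace ℝ (Fin d) → Measure (EuclideanSpace ℝ (Fin d)))
    (hμ : ∀ x, μ x = volume.withDensity (fun y =>
        ENNReal.ofReal (Real.exp (-(f y + ‖x - y‖ ^ 2 / (2 * lam)) / δ) / Z x)))
    (m : EuclideanSpace ℝ (Fin d) → EuclideanSpace ℝ (Fin d))
    (hm : ∀ x, m x = ∫ y, y ∂(μ x)) :
    ∀ x : EuclideanSpace ℝ (Fin d),
      DifferentiableAt ℝ (gradient F) x ∧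
      (∀ u : EuclideanSpace ℝ (Fin d),
        ⟪u, fderiv ℝ (gradient F) x u⟫ =
          (1 / lam) * ‖u‖ ^ 2 - (1 / (lam ^ 2 * δ)) * ∫ y, ⟪u, y - m x⟫ ^ 2 ∂(μ x)) ∧
      ((∀ u : EuclideanSpace ℝ (Fin d),
          (∫ y, ⟪u, y - m x⟫ ^ 2 ∂(μ x)) ≤ lam * δ * ‖u‖ ^ 2) →
        ∀ u : EuclideanSpace ℝ (Fin d), 0 ≤ ⟪u, fderiv ℝ (gradient F) x u⟫) := by
  intro x₀
  have hFeq : F = FF f δ lam := funext fun x => by rw [hF x]; rfl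
  have hgrad : gradient F = GG f δ lam := by
    funext x
    rw [hFeq]
    exact (hasGradientAt_FF hf hδ hlam hint x).gradient
  have hGd := hasFDerivAt_GG hf hδ hlam hint x₀
  have hdiff : DifferentiableAt ℝ (gradient F) x₀ := by
    rw [hgrad]; exact hGd.differentiableAt
  have hfd : fderiv ℝ (gradient F) x₀ = HH f δ lam x₀ := by
    rw [hgrad]; exact hGd.fderiv
  have hμx : μ x₀ = volume.withDensity
      (fun y => ENNReal.ofReal (kk f δ lam x₀ y / ZZ f δ lam x₀)) := by
    rw [hμ x₀, hZ x₀]; rfl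
  have hmx : m x₀ = x₀ + (ZZ f δ lam x₀)⁻¹ • VV f δ lam x₀ := by
    rw [hm x₀, hμx]
    exact mean_eq hf hδ hlam hint x₀
  have hkey : ∀ u : EuclideanSpace ℝ (Fin d), ⟪u, fderiv ℝ (gradient F) x₀ u⟫ =
      (1 / lam) * ‖u‖ ^ 2 - (1 / (lam ^ 2 * δ)) * ∫ y, ⟪u, y - m x₀⟫ ^ 2 ∂(μ x₀) := by
    intro u
    rw [hfd, hμx, hmx, cov_eq hf hδ hlam hint x₀ u]
    exact inner_HH_eq hf hδ hlam hint x₀ u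
  refine ⟨hdiff, hkey, ?_⟩
  intro hcov u
  rw [hkey u]
  have h1 := hcov u
  have h2 : (1 / (lam ^ 2 * δ)) * (∫ y, (⟪u, y - m x₀⟫ : ℝ) ^ 2 ∂(μ x₀))
      ≤ (1 / (lam ^ 2 * δ)) * (lam * δ * ‖u‖ ^ 2) :=
    mul_le_mul_of_nonneg_left h1 (by positivity)
  have heq : (1 / (lam ^ 2 * δ)) * (lam * δ * ‖u‖ ^ 2) = (1 / lam) * ‖u‖ ^ 2 := by
    field_simp
  linarith
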